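/- Let α ∈ (0,1) be irrational and define T : 𝕋² → 𝕋² by T(x,y) = (x + α, x + y) (the affine map with matrix rows (1,0),(1,1) and translation (α,0)). Then Tⁿ(x,y) = (x + nα, n(n−1)α/2 + nx + y) for all n ≥ 1, and with f(x,y) = e^{2πiy} and the starting point (α/2, 0) one has, for every N ≥ 1, (1/N)·Σ_{n=1}^N e^{−πin²α} f(Tⁿ(α/2, 0)) = 1. Consequently the oscillating sequence c_n = e^{−πin²α} is not linearly disjoint from the flow (𝕋², T). -/

import Mathlib

open Filter Finset Topology
open scoped Classical

/-- A sequence of complex numbers is *oscillating* if its twisted Cesàro means tend to zero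
for every frequency `t ∈ [0,1)`. -/
def Oscillating (c : ℕ → ℂ) : Prop :=
  ∀ t : ℝ, 0 ≤ t → t < 1 →
    Filter.Tendsto
      (fun N : ℕ => (N : ℂ)⁻¹ * ∑ n ∈ Finset.Icc 1 N,
        c n * Complex.exp (-(2 * Real.pi * Complex.I * n * t)))
      Filter.atTop (nhds 0)

/-- The growth condition: `∑_{n=1}^N |c n|^λ = O(N)` for some `λ > 1`. -/
def GrowthCondition (c : ℕ → ℂ) : Prop :=
  ∃ lam : ℝ, 1 < lam ∧ ∃ C : ℝ, ∀ N : ℕ,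
    ∑ n ∈ Finset.Icc 1 N, ‖c n‖ ^ lam ≤ C * N

/-- Upper density of a set of natural numbers. -/
noncomputable def upperDensity (E : Set ℕ) : ℝ :=
  Filter.limsup (fun N : ℕ => (((Finset.Icc 1 N).filter (fun n => n ∈ E)).card : ℝ) / N)
    Filter.atTop

/-- A flow is mean-L-stable (MLS). -/
def IsMLS {X : Type*} [PseudoMetricSpace X] (T : X → X) : Prop :=
  ∀ ε : ℝ, 0 < ε → ∃ δ : ℝ, 0 < δ ∧ ∀ x y : X, dist x y < δ →
    upperDensity {n : ℕ | ε ≤ dist (T^[n] x) (T^[n] y)} < ε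

/-- The restriction of a flow to a subset `K` is mean-L-stable. -/
def IsMLSOn {X : Type*} [PseudoMetricSpace X] (T : X → X) (K : Set X) : Prop :=
  ∀ ε : ℝ, 0 < ε → ∃ δ : ℝ, 0 < δ ∧ ∀ x ∈ K, ∀ y ∈ K, dist x y < δ →
    upperDensity {n : ℕ | ε ≤ dist (T^[n] x) (T^[n] y)} < ε

/-- A minimal subset of a flow: nonempty, closed, invariant, and every forward orbit is dense. -/
def MinimalSubset {X : Type*} [TopologicalSpace X] (T : X → X) (K : Set X) : Prop :=
  K.Nonempty ∧ IsClosed K ∧ Set.MapsTo T K K ∧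
    ∀ x ∈ K, K ⊆ closure (Set.range fun n : ℕ => T^[n] x)

/-- A flow is minimally mean-L-stable (MMLS) if its restriction to every minimal subset is MLS. -/
def IsMMLS {X : Type*} [PseudoMetricSpace X] (T : X → X) : Prop :=
  ∀ K : Set X, MinimalSubset T K → IsMLSOn T K

/-- `x` is mean attracted to `K`. -/
def MeanAttracted {X : Type*} [PseudoMetricSpace X] (T : X → X) (x : X) (K : Set X) : Prop :=
  ∀ ε : ℝ, 0 < ε → ∃ z ∈ K,
    Filter.limsup
      (fun N : ℕ => (N : ℝ)⁻¹ * ∑ n ∈ Finset.Icc 1 N, dist (T^[n] x) (T^[n] z))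
      Filter.atTop < ε

/-- A flow is minimally mean attractable (MMA). -/
def IsMMA {X : Type*} [PseudoMetricSpace X] (T : X → X) : Prop :=
  ∀ x : X, ∃ K : Set X, MinimalSubset T K ∧ MeanAttracted T x K

/-- A sequence is linearly disjoint from a flow. -/
def LinearlyDisjoint {X : Type*} [TopologicalSpace X] (c : ℕ → ℂ) (T : X → X) : Prop :=
  ∀ f : C(X, ℂ), ∀ x : X,
    Filter.Tendsto
      (fun N : ℕ => (N : ℂ)⁻¹ * ∑ n ∈ Finset.Icc 1 N, c n * f (T^[n] x))
      Filter.atTop (nhds 0)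

/-- An equicontinuous flow. -/
def EquicontinuousFlow {X : Type*} [PseudoMetricSpace X] (T : X → X) : Prop :=
  ∀ ε : ℝ, 0 < ε → ∃ δ : ℝ, 0 < δ ∧ ∀ x y : X, dist x y < δ →
    ∀ n : ℕ, dist (T^[n] x) (T^[n] y) < ε



/-- The integer lattice `ℤ²` inside the Euclidean plane, generated by the standard basis. -/
noncomputable def torusLattice : AddSubgroup (EuclideanSpace ℝ (Fin 2)) :=
  AddSubgroup.closure (Set.range fun i : Fin 2 => EuclideanSpace.single i (1 : ℝ))

/-- The 2-torus `𝕋² = ℝ²/ℤ²`, equipped with the quotient (semi)norm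
`‖x‖_{𝕋²} = inf_{n ∈ ℤ²} ‖x - n‖_{ℝ²}`. -/
abbrev Torus2 : Type := EuclideanSpace ℝ (Fin 2) ⧸ torusLattice

/-- The linear action of a `2×2` integer matrix on the Euclidean plane. -/
noncomputable def matAction (A : Matrix (Fin 2) (Fin 2) ℤ) (v : EuclideanSpace ℝ (Fin 2)) :
    EuclideanSpace ℝ (Fin 2) :=
  (WithLp.equiv 2 (Fin 2 → ℝ)).symm
    ((A.map (Int.cast : ℤ → ℝ)).mulVec (WithLp.equiv 2 (Fin 2 → ℝ) v))

/-- `A` is diagonalizable over `ℂ`. -/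
def DiagonalizableOverC (A : Matrix (Fin 2) (Fin 2) ℤ) : Prop :=
  ∃ P : Matrix (Fin 2) (Fin 2) ℂ, IsUnit P.det ∧
    (P⁻¹ * A.map (Int.cast : ℤ → ℂ) * P).IsDiag

/-- All (complex) eigenvalues of `A` have modulus `1`. -/
def EigenvaluesModulusOne (A : Matrix (Fin 2) (Fin 2) ℤ) : Prop :=
  ∀ μ ∈ (A.map (Int.cast : ℤ → ℂ)).charpoly.roots, ‖μ‖ = 1

/-- The point of the Euclidean plane with coordinates `(a, b)`. -/
noncomputable def planeVec (a b : ℝ) : EuclideanSpace ℝ (Fin 2) :=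
  (WithLp.equiv 2 (Fin 2 → ℝ)).symm ![a, b]

/-- The affine map `(x, y) ↦ (x + α, x + y)` on the plane (matrix rows `(1,0),(1,1)`,
translation `(α,0)`). -/
noncomputable def skewAction (α : ℝ) (v : EuclideanSpace ℝ (Fin 2)) :
    EuclideanSpace ℝ (Fin 2) :=
  planeVec (WithLp.equiv 2 (Fin 2 → ℝ) v 0 + α)
    (WithLp.equiv 2 (Fin 2 → ℝ) v 0 + WithLp.equiv 2 (Fin 2 → ℝ) v 1)

/-- For irrational `α ∈ (0,1)` and the affine map
`T(x,y) = (x + α, x + y)` on `𝕋²`: `Tⁿ(x,y) = (x + nα, n(n-1)α/2 + nx + y)`; with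
`f(x,y) = e^{2πiy}` and starting point `(α/2, 0)` the weighted averages of
`c_n = e^{-πin²α}` are constantly `1`; hence the oscillating sequence `(c_n)` is **not**
linearly disjoint from the flow `(𝕋², T)`. -/

private lemma geom_bound (w : ℂ) (hw : ‖w‖ = 1) (hw1 : w ≠ 1) (a b : ℤ) :
    ‖∑ n ∈ Finset.Icc a b, w ^ n‖ ≤ 2 / ‖w - 1‖ := by
  have hw0 : w ≠ 0 := by intro h; rw [h] at hw; simp at hw
  have hden : 0 < ‖w - 1‖ := by
    rw [norm_pos_iff]; exact sub_ne_zero.mpr hw1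
  rcases le_or_gt a b with hab | hab
  · set M := (b + 1 - a).toNat with hM
    have hre : ∑ n ∈ Finset.Icc a b, w ^ n = ∑ k ∈ Finset.range M, w ^ a * w ^ (k : ℤ) := by
      apply Finset.sum_nbij' (fun n => (n - a).toNat) (fun k => a + (k : ℤ))
      · intro n hn; simp only [Finset.mem_Icc] at hn; simp only [Finset.mem_range]; omega
      · intro k hk; simp only [Finset.mem_range] at hk; simp only [Finset.mem_Icc]; omega
      · intro n hn; simp only [Finset.mem_Icc] at hn; omega
      · intro k hk; simp only [Finset.mem_range] at hk; omega
      · intro n hn; simp only [Finset.mem_Icc] at hn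
        rw [← zpow_add₀ hw0]
        congr 1
        omega
    rw [hre, ← Finset.mul_sum]
    have : ∑ k ∈ Finset.range M, w ^ (k : ℤ) = (w ^ M - 1) / (w - 1) := by
      rw [← geom_sum_eq hw1 M]
      apply Finset.sum_congr rfl
      intro k _; exact zpow_natCast w k
    rw [this, norm_mul, norm_div, norm_zpow, hw, one_zpow, one_mul]
    gcongr
    calc ‖w ^ M - 1‖ ≤ ‖w ^ M‖ + 1 := by
          simpa using norm_sub_le (w ^ M) 1
      _ = 2 := by rw [norm_pow, hw]; norm_num
  · simp [Finset.Icc_eq_empty_of_lt hab]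
    positivity

private lemma vdc (v : ℤ → ℂ) (N H : ℕ) (hH : 1 ≤ H)
    (hv1 : ∀ n, ‖v n‖ ≤ 1)
    (hv0 : ∀ n : ℤ, n ∉ Finset.Icc (1:ℤ) (N:ℤ) → v n = 0) :
    (H:ℝ)^2 * ‖∑ n ∈ Finset.Icc (1:ℤ) (N:ℤ), v n‖^2 ≤
      ((N:ℝ) + H) * ((H:ℝ) * ((N:ℝ)+H) +
        ∑ p ∈ (Finset.range H).offDiag,
          ‖∑ n ∈ Finset.Icc (2 - (H:ℤ)) (N:ℤ),
            v (n + p.1) * (starRingEnd ℂ) (v (n + p.2))‖) := by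
  set S := ∑ n ∈ Finset.Icc (1:ℤ) (N:ℤ), v n with hS
  set W := Finset.Icc (2 - (H:ℤ)) (N:ℤ) with hW
  have hcardZ : (W.card : ℤ) ≤ (N:ℤ) + H := by
    rw [hW, Int.card_Icc, Int.toNat_eq_max]; omega
  have hcardW : (W.card : ℝ) ≤ (N:ℝ) + H := by exact_mod_cast hcardZ
  have hcard0 : (0:ℝ) ≤ (W.card : ℝ) := by positivity
  -- step A
  have hstepA : ∀ h ∈ Finset.range H, ∑ n ∈ W, v (n + (h:ℤ)) = S := by
    intro h hh
    simp only [Finset.mem_range] at hh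
    have h1 : ∑ n ∈ W, v (n + (h:ℤ)) = ∑ m ∈ Finset.Icc (2 - (H:ℤ) + h) ((N:ℤ) + h), v m := by
      rw [← Finset.map_add_right_Icc, Finset.sum_map]
      simp [addRightEmbedding, hW]
    rw [h1, hS]
    symm
    apply Finset.sum_subset
    · apply Finset.Icc_subset_Icc <;> omega
    · intro x _ hx; exact hv0 x hx
  set a : ℤ → ℂ := fun n => ∑ h ∈ Finset.range H, v (n + (h:ℤ)) with ha
  have hsum_a : ∑ n ∈ W, a n = (H:ℂ) * S := by
    rw [ha, Finset.sum_comm, Finset.sum_congr rfl hstepA, Finset.sum_const, Finset.card_range,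
      nsmul_eq_mul]
  -- Cauchy-Schwarz
  have CS : ‖∑ n ∈ W, a n‖^2 ≤ (W.card : ℝ) * ∑ n ∈ W, ‖a n‖^2 := by
    calc ‖∑ n ∈ W, a n‖^2 ≤ (∑ n ∈ W, ‖a n‖)^2 := by
          apply pow_le_pow_left₀ (norm_nonneg _) (norm_sum_le _ _)
      _ = (∑ n ∈ W, 1 * ‖a n‖)^2 := by simp
      _ ≤ (∑ n ∈ W, (1:ℝ)^2) * ∑ n ∈ W, ‖a n‖^2 := Finset.sum_mul_sq_le_sq_mul_sq _ _ _
      _ = (W.card : ℝ) * ∑ n ∈ W, ‖a n‖^2 := by simp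
  -- expansion
  have expand : ∑ n ∈ W, ‖a n‖^2 =
      (∑ p ∈ (Finset.range H) ×ˢ (Finset.range H),
        ∑ n ∈ W, v (n + (p.1:ℤ)) * (starRingEnd ℂ) (v (n + (p.2:ℤ)))).re := by
    rw [Complex.re_sum]
    have : ∀ p ∈ (Finset.range H) ×ˢ (Finset.range H),
        (∑ n ∈ W, v (n + (p.1:ℤ)) * (starRingEnd ℂ) (v (n + (p.2:ℤ)))).re
        = ∑ n ∈ W, (v (n + (p.1:ℤ)) * (starRingEnd ℂ) (v (n + (p.2:ℤ)))).re := by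
      intro p _; rw [Complex.re_sum]
    rw [Finset.sum_congr rfl this, Finset.sum_comm]
    apply Finset.sum_congr rfl
    intro n _
    have h2 : ‖a n‖^2 = (a n * (starRingEnd ℂ) (a n)).re := by
      rw [Complex.mul_conj, ← Complex.sq_norm, Complex.ofReal_re]
    rw [h2, ha]
    rw [map_sum, Finset.sum_mul_sum, ← Finset.sum_product', Complex.re_sum]
  set B := ∑ p ∈ (Finset.range H).offDiag,
      ‖∑ n ∈ W, v (n + (p.1:ℤ)) * (starRingEnd ℂ) (v (n + (p.2:ℤ)))‖ with hB
  have hB0 : 0 ≤ B := Finset.sum_nonneg fun p _ => norm_nonneg _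
  have hsplit : (∑ p ∈ (Finset.range H) ×ˢ (Finset.range H),
      ∑ n ∈ W, v (n + (p.1:ℤ)) * (starRingEnd ℂ) (v (n + (p.2:ℤ)))).re
      ≤ (H:ℝ) * (W.card : ℝ) + B := by
    rw [← Finset.diag_union_offDiag (Finset.range H),
      Finset.sum_union (Finset.disjoint_diag_offDiag _), Complex.add_re]
    have hdiag : (∑ p ∈ (Finset.range H).diag,
        ∑ n ∈ W, v (n + (p.1:ℤ)) * (starRingEnd ℂ) (v (n + (p.2:ℤ)))).re
        ≤ (H:ℝ) * (W.card : ℝ) := by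
      rw [Finset.sum_diag, Complex.re_sum]
      calc ∑ h ∈ Finset.range H, (∑ n ∈ W, v (n + (h:ℤ)) * (starRingEnd ℂ) (v (n + (h:ℤ)))).re
          ≤ ∑ h ∈ Finset.range H, (W.card : ℝ) := by
            apply Finset.sum_le_sum
            intro h _
            rw [Complex.re_sum]
            calc ∑ n ∈ W, (v (n + (h:ℤ)) * (starRingEnd ℂ) (v (n + (h:ℤ)))).re
                ≤ ∑ n ∈ W, (1:ℝ) := by
                  apply Finset.sum_le_sum
                  intro n _
                  rw [Complex.mul_conj, Complex.ofReal_re, ← Complex.sq_norm]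
                  exact pow_le_one₀ (norm_nonneg _) (hv1 _)
              _ = (W.card : ℝ) := by simp
        _ = (H:ℝ) * (W.card : ℝ) := by simp [mul_comm]
    have hoff : (∑ p ∈ (Finset.range H).offDiag,
        ∑ n ∈ W, v (n + (p.1:ℤ)) * (starRingEnd ℂ) (v (n + (p.2:ℤ)))).re ≤ B := by
      refine (Complex.re_le_norm _).trans ?_
      exact (norm_sum_le _ _).trans (le_of_eq rfl)
    linarith
  have main : (H:ℝ)^2 * ‖S‖^2 = ‖∑ n ∈ W, a n‖^2 := by
    rw [hsum_a, norm_mul, mul_pow, Complex.norm_natCast]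
  calc (H:ℝ)^2 * ‖S‖^2 = ‖∑ n ∈ W, a n‖^2 := main
    _ ≤ (W.card : ℝ) * ∑ n ∈ W, ‖a n‖^2 := CS
    _ = (W.card : ℝ) * (∑ p ∈ (Finset.range H) ×ˢ (Finset.range H),
        ∑ n ∈ W, v (n + (p.1:ℤ)) * (starRingEnd ℂ) (v (n + (p.2:ℤ)))).re := by rw [expand]
    _ ≤ (W.card : ℝ) * ((H:ℝ) * (W.card : ℝ) + B) := by
        apply mul_le_mul_of_nonneg_left hsplit hcard0
    _ ≤ ((N:ℝ) + H) * ((H:ℝ) * ((N:ℝ) + H) + B) := by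
        apply mul_le_mul hcardW _ _ (by positivity)
        · exact add_le_add (mul_le_mul_of_nonneg_left hcardW (by positivity)) le_rfl
        · positivity

noncomputable def Efun (α t : ℝ) (n : ℤ) : ℂ :=
  Complex.exp ((-(Real.pi * (n:ℝ)^2 * α + 2*Real.pi*(n:ℝ)*t) : ℝ) * Complex.I)

lemma Efun_norm (α t : ℝ) (n : ℤ) : ‖Efun α t n‖ = 1 := by
  rw [Efun, Complex.norm_exp, Complex.mul_I_re, Complex.ofReal_im,
    neg_zero, Real.exp_zero]

lemma w_ne_one (α : ℝ) (hirr : Irrational α) (r : ℤ) (hr : r ≠ 0) :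
    Complex.exp ((-(2*Real.pi*α*(r:ℝ)) : ℝ) * Complex.I) ≠ 1 := by
  intro hkk
  rw [Complex.exp_eq_one_iff] at hkk
  obtain ⟨k, hk⟩ := hkk
  have hcan : ((-(2*Real.pi*α*(r:ℝ)) : ℝ) : ℂ) = (((k:ℝ) * (2*Real.pi) : ℝ) : ℂ) := by
    apply mul_right_cancel₀ Complex.I_ne_zero
    rw [hk]; push_cast; ring
  have hre : -(2*Real.pi*α*(r:ℝ)) = (k:ℝ) * (2*Real.pi) := by exact_mod_cast hcan
  have hr' : (r:ℝ) ≠ 0 := Int.cast_ne_zero.mpr hr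
  have hαr : α * (r:ℝ) = -(k:ℝ) := by
    apply mul_left_cancel₀ (ne_of_gt (by positivity : (0:ℝ) < 2*Real.pi))
    linear_combination -hre
  have : α = (((-k : ℚ) / (r : ℚ) : ℚ) : ℝ) := by
    push_cast
    rw [eq_div_iff hr']
    linear_combination hαr
  exact hirr ⟨_, this.symm⟩

lemma corr_bound (α t : ℝ) (hirr : Irrational α) (N H : ℕ) (p : ℕ × ℕ)
    (hp : p ∈ (Finset.range H).offDiag) :
    ‖∑ n ∈ Finset.Icc (2 - (H:ℤ)) (N:ℤ),
        (if n + (p.1:ℤ) ∈ Finset.Icc (1:ℤ) (N:ℤ) then Efun α t (n + p.1) else 0) *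
          (starRingEnd ℂ) (if n + (p.2:ℤ) ∈ Finset.Icc (1:ℤ) (N:ℤ) then Efun α t (n + p.2) else 0)‖
      ≤ 2 / ‖Complex.exp ((-(2*Real.pi*α*((p.1:ℝ) - (p.2:ℝ))) : ℝ) * Complex.I) - 1‖ := by
  obtain ⟨h, h'⟩ := p
  rw [Finset.mem_offDiag] at hp
  obtain ⟨hh, hh', hne⟩ := hp
  rw [Finset.mem_range] at hh hh'
  simp only at hne ⊢
  have hr : ((h:ℤ) - (h':ℤ)) ≠ 0 := by
    intro hc; apply hne; omega
  have hw1 : Complex.exp ((-(2*Real.pi*α*((h:ℝ) - (h':ℝ))) : ℝ) * Complex.I) ≠ 1 := by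
    have := w_ne_one α hirr ((h:ℤ) - (h':ℤ)) hr
    have hcast : (((h:ℤ) - (h':ℤ) : ℤ):ℝ) = (h:ℝ) - (h':ℝ) := by push_cast; ring
    rw [hcast] at this
    exact this
  have hwnorm : ‖Complex.exp ((-(2*Real.pi*α*((h:ℝ) - (h':ℝ))) : ℝ) * Complex.I)‖ = 1 := by
    rw [Complex.norm_exp, Complex.mul_I_re, Complex.ofReal_im,
      neg_zero, Real.exp_zero]
  have hterm : ∀ n : ℤ, Efun α t (n + h) * (starRingEnd ℂ) (Efun α t (n + h')) =
      Complex.exp ((-(Real.pi * α * ((h:ℝ)^2 - (h':ℝ)^2) + 2*Real.pi*t*((h:ℝ) - (h':ℝ))) : ℝ)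
        * Complex.I) *
      (Complex.exp ((-(2*Real.pi*α*((h:ℝ) - (h':ℝ))) : ℝ) * Complex.I)) ^ n := by
    intro n
    rw [Efun, Efun, ← Complex.exp_conj, map_mul, Complex.conj_ofReal, Complex.conj_I,
      ← Complex.exp_int_mul, ← Complex.exp_add, ← Complex.exp_add]
    congr 1
    push_cast
    ring
  have hsub : Finset.Icc (1 - ((h:ℤ) ⊓ (h':ℤ))) ((N:ℤ) - ((h:ℤ) ⊔ (h':ℤ)))
      ⊆ Finset.Icc (2 - (H:ℤ)) (N:ℤ) := by
    apply Finset.Icc_subset_Icc <;> omega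
  have hzero : ∀ x ∈ Finset.Icc (2 - (H:ℤ)) (N:ℤ),
      x ∉ Finset.Icc (1 - ((h:ℤ) ⊓ (h':ℤ))) ((N:ℤ) - ((h:ℤ) ⊔ (h':ℤ))) →
      (if x + (h:ℤ) ∈ Finset.Icc (1:ℤ) (N:ℤ) then Efun α t (x + h) else 0) *
        (starRingEnd ℂ) (if x + (h':ℤ) ∈ Finset.Icc (1:ℤ) (N:ℤ) then Efun α t (x + h') else 0)
        = 0 := by
    intro x _ hnx
    rw [Finset.mem_Icc] at hnx
    by_cases h1 : x + (h:ℤ) ∈ Finset.Icc (1:ℤ) (N:ℤ)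
    · have h1' := Finset.mem_Icc.mp h1
      have h2 : x + (h':ℤ) ∉ Finset.Icc (1:ℤ) (N:ℤ) := by
        rw [Finset.mem_Icc]; omega
      rw [if_neg h2, map_zero, mul_zero]
    · rw [if_neg h1, zero_mul]
  rw [← Finset.sum_subset hsub hzero]
  have hcongr : ∀ n ∈ Finset.Icc (1 - ((h:ℤ) ⊓ (h':ℤ))) ((N:ℤ) - ((h:ℤ) ⊔ (h':ℤ))),
      (if n + (h:ℤ) ∈ Finset.Icc (1:ℤ) (N:ℤ) then Efun α t (n + h) else 0) *
        (starRingEnd ℂ) (if n + (h':ℤ) ∈ Finset.Icc (1:ℤ) (N:ℤ) then Efun α t (n + h') else 0)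
      = Complex.exp ((-(Real.pi * α * ((h:ℝ)^2 - (h':ℝ)^2) + 2*Real.pi*t*((h:ℝ) - (h':ℝ))) : ℝ)
          * Complex.I) *
        (Complex.exp ((-(2*Real.pi*α*((h:ℝ) - (h':ℝ))) : ℝ) * Complex.I)) ^ n := by
    intro n hn
    rw [Finset.mem_Icc] at hn
    rw [if_pos (by rw [Finset.mem_Icc]; omega), if_pos (by rw [Finset.mem_Icc]; omega)]
    exact hterm n
  rw [Finset.sum_congr rfl hcongr, ← Finset.mul_sum, norm_mul]
  have hnc : ‖Complex.exp ((-(Real.pi * α * ((h:ℝ)^2 - (h':ℝ)^2)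
      + 2*Real.pi*t*((h:ℝ) - (h':ℝ))) : ℝ) * Complex.I)‖ = 1 := by
    rw [Complex.norm_exp, Complex.mul_I_re, Complex.ofReal_im,
      neg_zero, Real.exp_zero]
  rw [hnc, one_mul]
  exact geom_bound _ hwnorm hw1 _ _

lemma weyl_osc (α : ℝ) (hirr : Irrational α) (t : ℝ) :
    Filter.Tendsto
      (fun N : ℕ => (N : ℂ)⁻¹ * ∑ n ∈ Finset.Icc 1 N,
        Complex.exp (-(Real.pi * Complex.I * (n : ℂ) ^ 2 * α)) *
          Complex.exp (-(2 * Real.pi * Complex.I * (n : ℕ) * (t : ℝ))))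
      Filter.atTop (nhds 0) := by
  have hsum : ∀ N : ℕ, (∑ n ∈ Finset.Icc 1 N,
      Complex.exp (-(Real.pi * Complex.I * (n : ℂ) ^ 2 * α)) *
        Complex.exp (-(2 * Real.pi * Complex.I * (n : ℕ) * (t : ℝ))))
      = ∑ n ∈ Finset.Icc (1:ℤ) (N:ℤ), Efun α t n := by
    intro N
    apply Finset.sum_nbij' (fun n : ℕ => (n:ℤ)) (fun m : ℤ => m.toNat)
    · intro n hn; rw [Finset.mem_Icc] at hn ⊢; omega
    · intro m hm; rw [Finset.mem_Icc] at hm ⊢; omega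
    · intro n _; omega
    · intro m hm; rw [Finset.mem_Icc] at hm; omega
    · intro n _
      rw [Efun, ← Complex.exp_add]
      congr 1
      push_cast
      ring
  rw [Metric.tendsto_atTop]
  intro ε hε
  set H : ℕ := ⌈6/ε^2⌉₊ + 1 with hHdef
  have hH1 : 1 ≤ H := by omega
  have hHr1 : (1:ℝ) ≤ (H:ℝ) := by exact_mod_cast hH1
  have hHε : 6 / (H:ℝ) < ε^2 := by
    have h1 : 6/ε^2 < (H:ℝ) := by
      calc 6/ε^2 ≤ (⌈6/ε^2⌉₊ : ℝ) := Nat.le_ceil _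
        _ < (H:ℝ) := by exact_mod_cast Nat.lt_succ_self _
    have hHpos : (0:ℝ) < H := by linarith
    rw [div_lt_iff₀ hHpos]
    rw [div_lt_iff₀ (by positivity)] at h1
    linarith
  set K : ℝ := ∑ p ∈ (Finset.range H).offDiag,
      2 / ‖Complex.exp ((-(2*Real.pi*α*((p.1:ℝ) - (p.2:ℝ))) : ℝ) * Complex.I) - 1‖ with hKdef
  have hK0 : 0 ≤ K := Finset.sum_nonneg fun p _ => by positivity
  refine ⟨max H (⌈K⌉₊ + 1), fun N hN => ?_⟩
  have hNH : H ≤ N := le_trans (le_max_left _ _) hN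
  have hN1 : 1 ≤ N := le_trans hH1 hNH
  have hNr1 : (1:ℝ) ≤ (N:ℝ) := by exact_mod_cast hN1
  have hNpos : (0:ℝ) < (N:ℝ) := by linarith
  have hHNr : (H:ℝ) ≤ (N:ℝ) := by exact_mod_cast hNH
  have hKN : K ≤ (N:ℝ) := by
    have h1 : (⌈K⌉₊ : ℕ) + 1 ≤ N := le_trans (le_max_right H _) hN
    have h2 : (⌈K⌉₊ : ℝ) ≤ (N:ℝ) := by exact_mod_cast le_trans (Nat.le_succ _) h1
    exact le_trans (Nat.le_ceil K) h2
  set v : ℤ → ℂ := fun n => if n ∈ Finset.Icc (1:ℤ) (N:ℤ) then Efun α t n else 0 with hvdef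
  have hv1 : ∀ n, ‖v n‖ ≤ 1 := by
    intro n; rw [hvdef]; dsimp only
    split
    · rw [Efun_norm]
    · simp
  have hv0 : ∀ n : ℤ, n ∉ Finset.Icc (1:ℤ) (N:ℤ) → v n = 0 := by
    intro n hn; rw [hvdef]; exact if_neg hn
  have hvdc := vdc v N H hH1 hv1 hv0
  have hvs : ∑ n ∈ Finset.Icc (1:ℤ) (N:ℤ), v n = ∑ n ∈ Finset.Icc (1:ℤ) (N:ℤ), Efun α t n :=
    Finset.sum_congr rfl fun n hn => if_pos hn
  set S : ℝ := ‖∑ n ∈ Finset.Icc (1:ℤ) (N:ℤ), Efun α t n‖ with hSdef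
  have hS0 : 0 ≤ S := norm_nonneg _
  have hBK : (∑ p ∈ (Finset.range H).offDiag,
      ‖∑ n ∈ Finset.Icc (2 - (H:ℤ)) (N:ℤ), v (n + (p.1:ℤ)) * (starRingEnd ℂ) (v (n + (p.2:ℤ)))‖)
      ≤ K := by
    rw [hKdef]
    exact Finset.sum_le_sum fun p hp => corr_bound α t hirr N H p hp
  rw [hvs] at hvdc
  have h12 : (H:ℝ)^2 * S^2 ≤ 6 * (H:ℝ) * (N:ℝ)^2 := by
    refine hvdc.trans (le_trans (mul_le_mul_of_nonneg_left (add_le_add_right hBK _)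
      (by positivity)) ?_)
    calc ((N:ℝ) + H) * ((H:ℝ) * ((N:ℝ) + H) + K)
        ≤ (2*(N:ℝ)) * ((H:ℝ) * (2*(N:ℝ)) + (N:ℝ)) := by
          apply mul_le_mul (by linarith) ?_ ?_ (by positivity)
          · have : (H:ℝ) * ((N:ℝ) + H) ≤ (H:ℝ) * (2*(N:ℝ)) :=
              mul_le_mul_of_nonneg_left (by linarith) (by positivity)
            linarith
          · have : (0:ℝ) ≤ (H:ℝ) * ((N:ℝ) + H) := by positivity
            linarith
      _ = 4*(H:ℝ)*(N:ℝ)^2 + 2*(N:ℝ)^2 := by ring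
      _ ≤ 6 * (H:ℝ) * (N:ℝ)^2 := by nlinarith [sq_nonneg (N:ℝ)]
  have h6 : 6 < ε^2 * (H:ℝ) := by
    rw [div_lt_iff₀ (by linarith : (0:ℝ) < (H:ℝ))] at hHε
    linarith
  have h9 : 0 < (ε^2 * (H:ℝ) - 6) * ((H:ℝ) * (N:ℝ)^2) :=
    mul_pos (by linarith) (by positivity)
  have h8 : S^2 * (H:ℝ)^2 < ε^2 * (N:ℝ)^2 * (H:ℝ)^2 := by nlinarith [h12, h9]
  have hS2 : S^2 < ε^2 * (N:ℝ)^2 :=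
    lt_of_mul_lt_mul_right h8 (by positivity)
  have hSN : S < ε * (N:ℝ) := by
    have hεN : (0:ℝ) ≤ ε * (N:ℝ) := by positivity
    apply lt_of_pow_lt_pow_left₀ 2 hεN
    calc S^2 < ε^2 * (N:ℝ)^2 := hS2
      _ = (ε * (N:ℝ))^2 := by ring
  rw [dist_zero_right, hsum N, norm_mul, norm_inv, Complex.norm_natCast, ← hSdef]
  calc (N:ℝ)⁻¹ * S = S / (N:ℝ) := by ring
    _ < ε := by rwa [div_lt_iff₀ hNpos]

lemma planeVec_apply (a b : ℝ) :
    (WithLp.equiv 2 (Fin 2 → ℝ)) (planeVec a b) = ![a, b] := by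
  rw [planeVec]; exact Equiv.apply_symm_apply _ _

theorem skew_product_not_linearly_disjoint
    (α : ℝ) (hα0 : 0 < α) (hα1 : α < 1) (hirr : Irrational α)
    (T : Torus2 → Torus2) (hTcont : Continuous T)
    (hT : ∀ v : EuclideanSpace ℝ (Fin 2),
      T (QuotientAddGroup.mk v) = QuotientAddGroup.mk (skewAction α v))
    (f : Torus2 → ℂ) (hfcont : Continuous f)
    (hf : ∀ v : EuclideanSpace ℝ (Fin 2),
      f (QuotientAddGroup.mk v) =
        Complex.exp (2 * Real.pi * Complex.I * (WithLp.equiv 2 (Fin 2 → ℝ) v 1))) :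
    (∀ x y : ℝ, ∀ n : ℕ, 1 ≤ n →
      T^[n] (QuotientAddGroup.mk (planeVec x y)) =
        QuotientAddGroup.mk
          (planeVec (x + n * α) ((n : ℝ) * ((n : ℝ) - 1) * α / 2 + n * x + y))) ∧
    (∀ N : ℕ, 1 ≤ N →
      (N : ℂ)⁻¹ * ∑ n ∈ Finset.Icc 1 N,
        Complex.exp (-(Real.pi * Complex.I * (n : ℂ) ^ 2 * α)) *
          f (T^[n] (QuotientAddGroup.mk (planeVec (α / 2) 0))) = 1) ∧
    Oscillating (fun n : ℕ => Complex.exp (-(Real.pi * Complex.I * (n : ℂ) ^ 2 * α))) ∧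
    ¬ LinearlyDisjoint
        (fun n : ℕ => Complex.exp (-(Real.pi * Complex.I * (n : ℂ) ^ 2 * α))) T := by
  have iter : ∀ x y : ℝ, ∀ n : ℕ,
      T^[n] (QuotientAddGroup.mk (planeVec x y)) =
        QuotientAddGroup.mk
          (planeVec (x + n * α) ((n : ℝ) * ((n : ℝ) - 1) * α / 2 + n * x + y)) := by
    intro x y n
    induction n with
    | zero =>
      simp only [Function.iterate_zero, id_eq, Nat.cast_zero]
      norm_num
    | succ n ih =>
      rw [Function.iterate_succ_apply', ih, hT]
      congr 1
      rw [skewAction, planeVec_apply]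
      simp only [Matrix.cons_val_zero, Matrix.cons_val_one, Matrix.head_cons]
      congr 1 <;> push_cast <;> ring
  have part2 : ∀ N : ℕ, 1 ≤ N →
      (N : ℂ)⁻¹ * ∑ n ∈ Finset.Icc 1 N,
        Complex.exp (-(Real.pi * Complex.I * (n : ℂ) ^ 2 * α)) *
          f (T^[n] (QuotientAddGroup.mk (planeVec (α / 2) 0))) = 1 := by
    intro N hN
    have hterm : ∀ n ∈ Finset.Icc 1 N,
        Complex.exp (-(Real.pi * Complex.I * (n : ℂ) ^ 2 * α)) *
          f (T^[n] (QuotientAddGroup.mk (planeVec (α / 2) 0))) = 1 := by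
      intro n _
      rw [iter (α/2) 0 n, hf, planeVec_apply]
      simp only [Matrix.cons_val_one, Matrix.head_cons, Matrix.cons_val_zero]
      rw [← Complex.exp_add]
      have harg : -(Real.pi * Complex.I * (n : ℂ) ^ 2 * α) +
          2 * Real.pi * Complex.I *
            (((n : ℝ) * ((n : ℝ) - 1) * α / 2 + (n:ℝ) * (α / 2) + 0 : ℝ) : ℂ) = 0 := by
        push_cast
        ring
      rw [harg, Complex.exp_zero]
    rw [Finset.sum_congr rfl hterm, Finset.sum_const, Nat.card_Icc]
    simp only [Nat.add_sub_cancel, nsmul_eq_mul, mul_one]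
    rw [inv_mul_cancel₀]
    exact_mod_cast Nat.pos_iff_ne_zero.mp (by omega)
  refine ⟨fun x y n _ => iter x y n, part2, ?_, ?_⟩
  · intro t _ _
    exact weyl_osc α hirr t
  · intro hLD
    have h := hLD ⟨f, hfcont⟩ (QuotientAddGroup.mk (planeVec (α / 2) 0))
    have heq : ∀ᶠ N : ℕ in Filter.atTop,
        (N : ℂ)⁻¹ * ∑ n ∈ Finset.Icc 1 N,
          (fun n : ℕ => Complex.exp (-(Real.pi * Complex.I * (n : ℂ) ^ 2 * α))) n *
            (⟨f, hfcont⟩ : C(Torus2, ℂ)) (T^[n] (QuotientAddGroup.mk (planeVec (α / 2) 0)))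
        = 1 := by
      filter_upwards [Filter.eventually_ge_atTop 1] with N hN
      simpa using part2 N hN
    have h1 : Filter.Tendsto (fun _ : ℕ => (1 : ℂ)) Filter.atTop (nhds 0) :=
      Filter.Tendsto.congr' heq h
    have h0 := tendsto_nhds_unique h1 tendsto_const_nhds
    exact one_ne_zero h0.symm
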